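/- Fix a dimension p ≥ 1, β > 0 and Δ > 0 with βΔ² > p/2, and define f : [0,∞) → ℝ by f(t) = 1 − (1+2βt)^{−p} exp(−2βΔ²/(1+2βt)). Then f'(t) < 0 for all t with 0 < t < Δ²/p − 1/(2β), and consequently f(t) < f(0) for all t in the interval (0, Δ²/p − 1/(2β)). -/

import Mathlib

private lemma kale_hasDerivAt (β Δ : ℝ) (p : ℕ) (s : ℝ) (hu : 0 < 1 + 2*β*s) :
    HasDerivAt (fun t : ℝ => 1 - (1 + 2*β*t) ^ (-(p:ℝ)) * Real.exp (-2*β*Δ^2 / (1+2*β*t)))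
      (2*β * (1 + 2*β*s)^(-(p:ℝ)-1) * Real.exp (-2*β*Δ^2/(1+2*β*s))
        * ((p:ℝ) - 2*β*Δ^2/(1+2*β*s))) s := by
  have h1 : HasDerivAt (fun t : ℝ => 1 + 2*β*t) (2*β) s := by
    simpa using ((hasDerivAt_id s).const_mul (2*β)).const_add 1
  have h2 := h1.rpow_const (p := -(p:ℝ)) (Or.inl hu.ne')
  have h3 : HasDerivAt (fun t : ℝ => -2*β*Δ^2 / (1+2*β*t))
      (2*β*Δ^2 * (2*β) / (1+2*β*s)^2) s := by
    have := (h1.inv hu.ne').const_mul (-2*β*Δ^2)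
    convert this using 1
    · rfl
    · rfl
    · rfl
    ring
  have h4 := h3.exp
  have h5 := (h2.mul h4).const_sub 1
  convert h5 using 1
  · rfl
  · rfl
  · rfl
  have hB : (1 + 2*β*s) ^ (-(p:ℝ)) = (1 + 2*β*s) ^ (-(p:ℝ)-1) * (1 + 2*β*s) := by
    rw [← Real.rpow_add_one hu.ne']
    ring_nf
  rw [hB]
  field_simp
  ring

/-- **Proposition 2, 'if' direction.** For `p ≥ 1`, `β > 0`, `Δ > 0` with `βΔ² > p/2`,
the function `f t = 1 - (1+2βt)^(-p) * exp(-2βΔ²/(1+2βt))` has `f' t < 0` for all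
`0 < t < Δ²/p - 1/(2β)`, and consequently `f t < f 0` on that interval. -/
theorem kale_mse_decreasing_of_large_signal
    (p : ℕ) (hp : 1 ≤ p) (β Δ : ℝ) (hβ : 0 < β) (hΔ : 0 < Δ)
    (hlarge : β * Δ ^ 2 > (p : ℝ) / 2)
    (f : ℝ → ℝ)
    (hf : ∀ t : ℝ, 0 ≤ t →
      f t = 1 - (1 + 2 * β * t) ^ (-(p : ℝ)) * Real.exp (-2 * β * Δ ^ 2 / (1 + 2 * β * t))) :
    ∀ t : ℝ, 0 < t → t < Δ ^ 2 / (p : ℝ) - 1 / (2 * β) →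
      deriv f t < 0 ∧ f t < f 0 := by
  intro t ht htT
  have hp0 : (0:ℝ) < (p:ℝ) := by exact_mod_cast hp
  set F : ℝ → ℝ := fun t => 1 - (1 + 2*β*t) ^ (-(p:ℝ)) * Real.exp (-2*β*Δ^2 / (1+2*β*t))
    with hF
  -- the derivative is negative at every point of (0, t]
  have hDneg : ∀ s : ℝ, 0 < s → s ≤ t → deriv F s < 0 := by
    intro s hs hst
    have hu : 0 < 1 + 2*β*s := by positivity
    have hD := (kale_hasDerivAt β Δ p s hu).deriv
    rw [hD]
    have hkey : (p:ℝ) * (1 + 2*β*s) < 2*β*Δ^2 := by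
      have hsT : s < Δ ^ 2 / (p : ℝ) - 1 / (2 * β) := lt_of_le_of_lt hst htT
      have h1 : (p:ℝ) * (Δ^2/(p:ℝ)) = Δ^2 := by field_simp
      have h2 : (2*β) * (1/(2*β)) = 1 := by field_simp
      nlinarith [mul_lt_mul_of_pos_left hsT hp0]
    have hlast : (p:ℝ) - 2*β*Δ^2/(1 + 2*β*s) < 0 := by
      rw [sub_neg, lt_div_iff₀ hu]
      linarith
    have hA : (0:ℝ) < (1 + 2*β*s)^(-(p:ℝ)-1) := Real.rpow_pos_of_pos hu _
    have hE : (0:ℝ) < Real.exp (-2*β*Δ^2/(1+2*β*s)) := Real.exp_pos _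
    have hpos : (0:ℝ) < 2*β * (1 + 2*β*s)^(-(p:ℝ)-1) * Real.exp (-2*β*Δ^2/(1+2*β*s)) := by
      positivity
    exact mul_neg_of_pos_of_neg hpos hlast
  -- f agrees with F on a neighborhood of t
  have hfEq : f =ᶠ[nhds t] F := by
    filter_upwards [Ioi_mem_nhds ht] with s hs
    exact hf s (le_of_lt (Set.mem_Ioi.mp hs))
  have hderiv : deriv f t = deriv F t := hfEq.deriv_eq
  constructor
  · rw [hderiv]
    exact hDneg t ht le_rfl
  · -- F is strictly decreasing on [0, t]
    have hanti : StrictAntiOn F (Set.Icc 0 t) := by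
      apply strictAntiOn_of_deriv_neg (convex_Icc 0 t)
      · intro s hs
        have hu : 0 < 1 + 2*β*s := by
          have := hs.1
          positivity
        exact (kale_hasDerivAt β Δ p s hu).continuousAt.continuousWithinAt
      · intro s hs
        rw [interior_Icc] at hs
        exact hDneg s hs.1 (le_of_lt hs.2)
    have h0 : f 0 = F 0 := hf 0 le_rfl
    have ht' : f t = F t := hf t (le_of_lt ht)
    rw [h0, ht']
    exact hanti (Set.left_mem_Icc.mpr (le_of_lt ht)) (Set.right_mem_Icc.mpr (le_of_lt ht)) ht
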